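/- Let I be a closed interval and f : I → ℝ a bounded upper semicontinuous function. Let L_J f denote the least concave majorant of the restriction of f to a subinterval J. Suppose b₁ < a₁ < a₂ < b₂ are points of I such that 2·f((aᵢ+bᵢ)/2) > L_I f(aᵢ) + L_I f(bᵢ) for i = 1,2. Then L_I f(x) = L_{[b₁,b₂]} f(x) for all x with a₁ ≤ x ≤ a₂. -/

import Mathlib

/-- The least concave majorant of `f` on the set `S`, evaluated at `x`:
the pointwise infimum of all functions concave on `S` that dominate `f` on `S`. -/
noncomputable def lcmaj (S : Set ℝ) (f : ℝ → ℝ) (x : ℝ) : ℝ :=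
  sInf {y : ℝ | ∃ g : ℝ → ℝ, ConcaveOn ℝ S g ∧ (∀ z ∈ S, f z ≤ g z) ∧ g x = y}

section aux
variable {f : ℝ → ℝ} {M c d x : ℝ}

lemma lcmaj_aux_nonempty (hM : ∀ z ∈ Set.Icc c d, |f z| ≤ M) (x : ℝ) :
    Set.Nonempty {y : ℝ | ∃ g : ℝ → ℝ, ConcaveOn ℝ (Set.Icc c d) g ∧
      (∀ z ∈ Set.Icc c d, f z ≤ g z) ∧ g x = y} :=
  ⟨M, fun _ => M, concaveOn_const _ (convex_Icc c d),
    fun z hz => (abs_le.1 (hM z hz)).2, rfl⟩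

lemma lcmaj_aux_bdd (hx : x ∈ Set.Icc c d) :
    BddBelow {y : ℝ | ∃ g : ℝ → ℝ, ConcaveOn ℝ (Set.Icc c d) g ∧
      (∀ z ∈ Set.Icc c d, f z ≤ g z) ∧ g x = y} :=
  ⟨f x, by rintro _ ⟨g, _, hgf, rfl⟩; exact hgf x hx⟩

lemma le_lcmaj (hM : ∀ z ∈ Set.Icc c d, |f z| ≤ M) (hx : x ∈ Set.Icc c d) :
    f x ≤ lcmaj (Set.Icc c d) f x :=
  le_csInf (lcmaj_aux_nonempty hM x) (by rintro _ ⟨g, _, hgf, rfl⟩; exact hgf x hx)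

lemma lcmaj_le {g : ℝ → ℝ} (hg : ConcaveOn ℝ (Set.Icc c d) g)
    (hgf : ∀ z ∈ Set.Icc c d, f z ≤ g z) (hx : x ∈ Set.Icc c d) :
    lcmaj (Set.Icc c d) f x ≤ g x :=
  csInf_le (lcmaj_aux_bdd hx) ⟨g, hg, hgf, rfl⟩

lemma lcmaj_concave (hM : ∀ z ∈ Set.Icc c d, |f z| ≤ M) :
    ConcaveOn ℝ (Set.Icc c d) (lcmaj (Set.Icc c d) f) := by
  refine ⟨convex_Icc c d, fun p hp q hq a b ha hb hab => ?_⟩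
  refine le_csInf (lcmaj_aux_nonempty hM _) ?_
  rintro _ ⟨g, hg, hgf, rfl⟩
  have h1 : lcmaj (Set.Icc c d) f p ≤ g p := lcmaj_le hg hgf hp
  have h2 : lcmaj (Set.Icc c d) f q ≤ g q := lcmaj_le hg hgf hq
  have := hg.2 hp hq ha hb hab
  simp only [smul_eq_mul] at this ⊢
  nlinarith [mul_le_mul_of_nonneg_left h1 ha, mul_le_mul_of_nonneg_left h2 hb]

lemma concave_chord {s : Set ℝ} {g : ℝ → ℝ} (hg : ConcaveOn ℝ s g) {u v cc dd t : ℝ}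
    (hu : u ∈ s) (hv : v ∈ s) (hc : cc ≤ g u) (hd : dd ≤ g v)
    (ht0 : 0 ≤ t) (ht1 : t ≤ 1) :
    t * cc + (1 - t) * dd ≤ g (t * u + (1 - t) * v) := by
  have := hg.2 hu hv ht0 (show (0:ℝ) ≤ 1 - t by linarith) (show t + (1 - t) = 1 by ring)
  simp only [smul_eq_mul] at this
  nlinarith [mul_le_mul_of_nonneg_left hc ht0,
    mul_le_mul_of_nonneg_left hd (by linarith : (0:ℝ) ≤ 1 - t)]

lemma linept {A B : ℝ} {g : ℝ → ℝ} (hg : ConcaveOn ℝ (Set.Icc A B) g) {u v p cc dd : ℝ}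
    (hu : u ∈ Set.Icc A B) (hv : v ∈ Set.Icc A B) (huv : u < v)
    (hp1 : u ≤ p) (hp2 : p ≤ v) (hc : cc ≤ g u) (hd : dd ≤ g v) :
    cc * (v - p) + dd * (p - u) ≤ g p * (v - u) := by
  have hvu : (0:ℝ) < v - u := by linarith
  set s := (v - p) / (v - u) with hs
  have hs0 : 0 ≤ s := div_nonneg (by linarith) hvu.le
  have hs1 : s ≤ 1 := by rw [hs, div_le_one hvu]; linarith
  have hps : p = s * u + (1 - s) * v := by have hsv : s * (v - u) = v - p := (by rw [hs]; exact div_mul_cancel₀ _ hvu.ne'); linear_combination hsv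
  have h := concave_chord hg hu hv hc hd hs0 hs1
  rw [← hps] at h
  have h2 := mul_le_mul_of_nonneg_right h hvu.le
  calc cc * (v - p) + dd * (p - u) = (s * cc + (1 - s) * dd) * (v - u) := by
        have hsv : s * (v - u) = v - p := by rw [hs]; exact div_mul_cancel₀ _ hvu.ne'
        linear_combination (dd - cc) * hsv
    _ ≤ g p * (v - u) := h2

end aux


noncomputable def hullK (A B : ℝ) (f : ℝ → ℝ) : Set (ℝ × ℝ) :=
  {q | q.1 ∈ Set.Icc A B ∧ q.2 ≤ f q.1}

noncomputable def hfun (A B : ℝ) (f : ℝ → ℝ) (p : ℝ) : ℝ :=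
  sSup {yy | (p, yy) ∈ convexHull ℝ (hullK A B f)}

section haux
variable {A B M : ℝ} {f : ℝ → ℝ}

lemma hullK_bd (hbd : ∀ z ∈ Set.Icc A B, |f z| ≤ M) :
    ∀ q ∈ convexHull ℝ (hullK A B f), q.2 ≤ M := by
  intro q hq
  have hsub : hullK A B f ⊆ {q : ℝ × ℝ | q.2 ≤ M} := by
    rintro ⟨p, y⟩ ⟨hp, hy⟩
    exact le_trans hy ((abs_le.1 (hbd p hp)).2)
  have hcx : Convex ℝ {q : ℝ × ℝ | q.2 ≤ M} :=
    convex_halfSpace_le ⟨fun p q => rfl, fun c p => rfl⟩ M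
  exact convexHull_min hsub hcx hq

lemma hfun_bddAbove (hbd : ∀ z ∈ Set.Icc A B, |f z| ≤ M) (p : ℝ) :
    BddAbove {yy | (p, yy) ∈ convexHull ℝ (hullK A B f)} :=
  ⟨M, fun yy hyy => hullK_bd hbd _ hyy⟩

lemma hfun_mem {p : ℝ} (hp : p ∈ Set.Icc A B) :
    f p ∈ {yy | (p, yy) ∈ convexHull ℝ (hullK A B f)} :=
  subset_convexHull ℝ (hullK A B f) ⟨hp, le_rfl⟩

lemma le_hfun (hbd : ∀ z ∈ Set.Icc A B, |f z| ≤ M) {p : ℝ} (hp : p ∈ Set.Icc A B) :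
    f p ≤ hfun A B f p :=
  le_csSup (hfun_bddAbove hbd p) (hfun_mem hp)

lemma hfun_concave (hbd : ∀ z ∈ Set.Icc A B, |f z| ≤ M) :
    ConcaveOn ℝ (Set.Icc A B) (hfun A B f) := by
  refine ⟨convex_Icc A B, fun p hp q hq a b ha hb hab => ?_⟩
  simp only [smul_eq_mul]
  by_cases ha0 : a = 0
  · have hb1 : b = 1 := by linarith
    simp [ha0, hb1]
  by_cases hb0 : b = 0
  · have ha1 : a = 1 := by linarith
    simp [ha1, hb0]
  have ha' : 0 < a := lt_of_le_of_ne ha (Ne.symm ha0)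
  have hb' : 0 < b := lt_of_le_of_ne hb (Ne.symm hb0)
  have Hmem : ∀ y1 ∈ {yy | (p, yy) ∈ convexHull ℝ (hullK A B f)},
      ∀ y2 ∈ {yy | (q, yy) ∈ convexHull ℝ (hullK A B f)},
      a * y1 + b * y2 ∈ {yy | (a * p + b * q, yy) ∈ convexHull ℝ (hullK A B f)} := by
    intro y1 h1 y2 h2
    have := (convex_convexHull ℝ (hullK A B f)) h1 h2 ha hb hab
    have heq : a • ((p, y1) : ℝ × ℝ) + b • (q, y2) = (a * p + b * q, a * y1 + b * y2) := rfl
    rwa [heq] at this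
  have H2 : ∀ y1 ∈ {yy | (p, yy) ∈ convexHull ℝ (hullK A B f)},
      a * y1 + b * hfun A B f q ≤ hfun A B f (a * p + b * q) := by
    intro y1 h1
    have hle : hfun A B f q ≤ (hfun A B f (a * p + b * q) - a * y1) / b := by
      apply csSup_le ⟨f q, hfun_mem hq⟩
      intro y2 h2
      rw [le_div_iff₀ hb']
      have := le_csSup (hfun_bddAbove hbd (a * p + b * q)) (Hmem y1 h1 y2 h2)
      have h3 : a * y1 + b * y2 ≤ hfun A B f (a * p + b * q) := this
      nlinarith [h3]
    have := (le_div_iff₀ hb').1 hle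
    nlinarith [this]
  have hle : hfun A B f p ≤ (hfun A B f (a * p + b * q) - b * hfun A B f q) / a := by
    apply csSup_le ⟨f p, hfun_mem hp⟩
    intro y1 h1
    rw [le_div_iff₀ ha']
    nlinarith [H2 y1 h1]
  have := (le_div_iff₀ ha').1 hle
  nlinarith [this]

end haux


lemma hull_bound {A B x R : ℝ} {f : ℝ → ℝ} (hAx : A ≤ x) (hxB : x ≤ B)
    (pb : ∀ u v cc dd t : ℝ, A ≤ u → u ≤ x → x ≤ v → v ≤ B → cc ≤ f u → dd ≤ f v →
      0 ≤ t → t ≤ 1 → x = t * u + (1 - t) * v → t * cc + (1 - t) * dd ≤ R) :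
    ∀ yy, (x, yy) ∈ convexHull ℝ (hullK A B f) → yy ≤ R := by
  have hfxR : f x ≤ R := by
    have := pb x x (f x) (f x) 1 hAx le_rfl le_rfl hxB le_rfl le_rfl zero_le_one le_rfl (by ring)
    linarith
  intro yy hyy
  rw [convexHull_eq] at hyy
  obtain ⟨ι, t, w, z, hw0, hw1, hzK, hcm⟩ := hyy
  rw [Finset.centerMass_eq_of_sum_1 _ _ hw1] at hcm
  have hsum1 : ∑ i ∈ t, w i * (z i).1 = x := by
    have := congrArg Prod.fst hcm
    simpa [Prod.fst_sum, smul_eq_mul] using this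
  have hsum2 : ∑ i ∈ t, w i * (z i).2 = yy := by
    have := congrArg Prod.snd hcm
    simpa [Prod.snd_sum, smul_eq_mul] using this
  classical
  set tL := t.filter (fun i => (z i).1 ≤ x) with htL
  set tR := t.filter (fun i => ¬ (z i).1 ≤ x) with htR
  set D := ∑ i ∈ tL, w i * (x - (z i).1) with hD
  have hzero : (∑ i ∈ tL, w i * ((z i).1 - x)) + ∑ i ∈ tR, w i * ((z i).1 - x) = 0 := by
    rw [htL, htR, Finset.sum_filter_add_sum_filter_not]
    have : ∑ i ∈ t, w i * ((z i).1 - x) =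
        (∑ i ∈ t, w i * (z i).1) - (∑ i ∈ t, w i) * x := by
      rw [Finset.sum_mul, ← Finset.sum_sub_distrib]
      exact Finset.sum_congr rfl (fun i _ => by ring)
    rw [this, hsum1, hw1]; ring
  have hneg : (∑ i ∈ tL, w i * ((z i).1 - x)) + D = 0 := by
    rw [hD, ← Finset.sum_add_distrib]
    exact Finset.sum_eq_zero (fun i _ => by ring)
  have hDR : ∑ i ∈ tR, w i * ((z i).1 - x) = D := by linarith
  have hD0 : 0 ≤ D := by
    rw [hD]
    apply Finset.sum_nonneg
    intro i hi
    obtain ⟨hit, hix⟩ := Finset.mem_filter.1 (htL ▸ hi)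
    exact mul_nonneg (hw0 i hit) (by linarith)
  by_cases hDz : D = 0
  · -- degenerate case
    have hsum0 : ∑ i ∈ tL, w i * (x - (z i).1) = 0 := by rw [← hD]; exact hDz
    have hLz : ∀ i ∈ tL, w i * (x - (z i).1) = 0 := by
      refine (Finset.sum_eq_zero_iff_of_nonneg ?_).1 hsum0
      intro i hi
      obtain ⟨hit, hix⟩ := Finset.mem_filter.1 (htL ▸ hi)
      exact mul_nonneg (hw0 i hit) (by linarith)
    have hRz : ∀ i ∈ tR, w i * ((z i).1 - x) = 0 := by
      rw [hDz] at hDR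
      refine (Finset.sum_eq_zero_iff_of_nonneg ?_).1 hDR
      intro i hi
      obtain ⟨hit, hix⟩ := Finset.mem_filter.1 (htR ▸ hi)
      push_neg at hix
      exact mul_nonneg (hw0 i hit) (by linarith)
    have hterm : ∀ i ∈ t, w i * (z i).2 ≤ w i * f x := by
      intro i hi
      by_cases hle : (z i).1 ≤ x
      · have h0 := hLz i (by rw [htL]; exact Finset.mem_filter.2 ⟨hi, hle⟩)
        rcases mul_eq_zero.1 h0 with hw | hzx
        · rw [hw]; simp
        · have hx1 : (z i).1 = x := by linarith
          have h2 := (hzK i hi).2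
          rw [hx1] at h2
          exact mul_le_mul_of_nonneg_left h2 (hw0 i hi)
      · have h0 := hRz i (by rw [htR]; exact Finset.mem_filter.2 ⟨hi, hle⟩)
        rcases mul_eq_zero.1 h0 with hw | hzx
        · rw [hw]; simp
        · exfalso; push_neg at hle; linarith
    calc yy = ∑ i ∈ t, w i * (z i).2 := hsum2.symm
      _ ≤ ∑ i ∈ t, w i * f x := Finset.sum_le_sum hterm
      _ = f x := by rw [← Finset.sum_mul, hw1, one_mul]
      _ ≤ R := hfxR
  · have hDpos : 0 < D := lt_of_le_of_ne hD0 (Ne.symm hDz)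
    -- per-pair bound
    have hpair : ∀ i ∈ tL, ∀ j ∈ tR,
        w i * (w j * ((z j).1 - x)) * (z i).2 + w j * (w i * (x - (z i).1)) * (z j).2
          ≤ (w i * (w j * ((z j).1 - x)) + w j * (w i * (x - (z i).1))) * R := by
      intro i hi j hj
      obtain ⟨hit, hix⟩ := Finset.mem_filter.1 (htL ▸ hi)
      obtain ⟨hjt, hjx⟩ := Finset.mem_filter.1 (htR ▸ hj)
      push_neg at hjx
      have ha : 0 ≤ w i * (w j * ((z j).1 - x)) :=
        mul_nonneg (hw0 i hit) (mul_nonneg (hw0 j hjt) (by linarith))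
      have hb : 0 ≤ w j * (w i * (x - (z i).1)) :=
        mul_nonneg (hw0 j hjt) (mul_nonneg (hw0 i hit) (by linarith))
      set a := w i * (w j * ((z j).1 - x)) with hadef
      set b := w j * (w i * (x - (z i).1)) with hbdef
      by_cases hab : a + b = 0
      · have ha0 : a = 0 := by linarith
        have hb0 : b = 0 := by linarith
        rw [ha0, hb0]; simp
      · have hab' : 0 < a + b := lt_of_le_of_ne (by linarith) (Ne.symm hab)
        have habs : a * ((z i).1 - x) + b * ((z j).1 - x) = 0 := by
          rw [hadef, hbdef]; ring
        set s := a / (a + b) with hsdef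
        have hs0 : 0 ≤ s := div_nonneg ha hab'.le
        have hs1 : s ≤ 1 := by rw [hsdef, div_le_one hab']; linarith
        have hxeq : x = s * (z i).1 + (1 - s) * (z j).1 := by
          have hkey : s * (z i).1 + (1 - s) * (z j).1 - x =
              (a * ((z i).1 - x) + b * ((z j).1 - x)) / (a + b) := by
            rw [hsdef]; field_simp <;> ring
          rw [habs] at hkey
          simp at hkey
          linarith
        have hres := pb (z i).1 (z j).1 (z i).2 (z j).2 s
          (hzK i hit).1.1 hix hjx.le (hzK j hjt).1.2 (hzK i hit).2 (hzK j hjt).2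
          hs0 hs1 hxeq
        have hmul := mul_le_mul_of_nonneg_left hres hab'.le
        have hls : (a + b) * (s * (z i).2 + (1 - s) * (z j).2) =
            a * (z i).2 + b * (z j).2 := by
          rw [hsdef]; field_simp <;> ring
        rw [hls] at hmul
        linarith
    -- double sum identities
    have e1 : ∀ i, ∑ j ∈ tR, w i * (w j * ((z j).1 - x)) * (z i).2 = (w i * (z i).2) * D := by
      intro i
      rw [← hDR, Finset.mul_sum]
      exact Finset.sum_congr rfl (fun j _ => by ring)
    have e2 : ∀ i, ∑ j ∈ tR, w j * (w i * (x - (z i).1)) * (z j).2 =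
        (w i * (x - (z i).1)) * (∑ j ∈ tR, w j * (z j).2) := by
      intro i
      rw [Finset.mul_sum]
      exact Finset.sum_congr rfl (fun j _ => by ring)
    have e3 : ∀ i, ∑ j ∈ tR, w i * (w j * ((z j).1 - x)) = w i * D := by
      intro i
      rw [← hDR, Finset.mul_sum]
    have e4 : ∀ i, ∑ j ∈ tR, w j * (w i * (x - (z i).1)) =
        (w i * (x - (z i).1)) * (∑ j ∈ tR, w j) := by
      intro i
      rw [Finset.mul_sum]
      exact Finset.sum_congr rfl (fun j _ => by ring)
    have hsplitW : (∑ i ∈ tL, w i) + (∑ i ∈ tR, w i) = 1 := by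
      rw [htL, htR, Finset.sum_filter_add_sum_filter_not, hw1]
    have hsplitY : (∑ i ∈ tL, w i * (z i).2) + (∑ i ∈ tR, w i * (z i).2) = yy := by
      rw [htL, htR, Finset.sum_filter_add_sum_filter_not, hsum2]
    have hident : ∑ i ∈ tL, ∑ j ∈ tR,
        (w i * (w j * ((z j).1 - x)) * (z i).2 + w j * (w i * (x - (z i).1)) * (z j).2)
          = D * yy := by
      have : ∀ i, ∑ j ∈ tR,
          (w i * (w j * ((z j).1 - x)) * (z i).2 + w j * (w i * (x - (z i).1)) * (z j).2)
            = (w i * (z i).2) * D + (w i * (x - (z i).1)) * (∑ j ∈ tR, w j * (z j).2) := by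
        intro i
        rw [Finset.sum_add_distrib, e1 i, e2 i]
      rw [Finset.sum_congr rfl (fun i _ => this i), Finset.sum_add_distrib,
        ← Finset.sum_mul, ← Finset.sum_mul, ← hD]
      calc (∑ i ∈ tL, w i * (z i).2) * D + D * (∑ j ∈ tR, w j * (z j).2)
          = D * ((∑ i ∈ tL, w i * (z i).2) + (∑ j ∈ tR, w j * (z j).2)) := by ring
        _ = D * yy := by rw [hsplitY]
    have hident2 : ∑ i ∈ tL, ∑ j ∈ tR,
        (w i * (w j * ((z j).1 - x)) + w j * (w i * (x - (z i).1))) = D := by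
      have : ∀ i, ∑ j ∈ tR,
          (w i * (w j * ((z j).1 - x)) + w j * (w i * (x - (z i).1)))
            = w i * D + (w i * (x - (z i).1)) * (∑ j ∈ tR, w j) := by
        intro i
        rw [Finset.sum_add_distrib, e3 i, e4 i]
      rw [Finset.sum_congr rfl (fun i _ => this i), Finset.sum_add_distrib,
        ← Finset.sum_mul, ← Finset.sum_mul, ← hD]
      calc (∑ i ∈ tL, w i) * D + D * (∑ j ∈ tR, w j)
          = D * ((∑ i ∈ tL, w i) + (∑ j ∈ tR, w j)) := by ring
        _ = D := by rw [hsplitW]; ring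
    have hfinal : D * yy ≤ D * R := by
      rw [← hident]
      calc ∑ i ∈ tL, ∑ j ∈ tR,
          (w i * (w j * ((z j).1 - x)) * (z i).2 + w j * (w i * (x - (z i).1)) * (z j).2)
          ≤ ∑ i ∈ tL, ∑ j ∈ tR,
            (w i * (w j * ((z j).1 - x)) + w j * (w i * (x - (z i).1))) * R :=
          Finset.sum_le_sum (fun i hi => Finset.sum_le_sum (fun j hj => hpair i hi j hj))
        _ = (∑ i ∈ tL, ∑ j ∈ tR,
            (w i * (w j * ((z j).1 - x)) + w j * (w i * (x - (z i).1)))) * R := by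
          rw [Finset.sum_mul]
          exact Finset.sum_congr rfl (fun i _ => by rw [Finset.sum_mul])
        _ = D * R := by rw [hident2]
    exact le_of_mul_le_mul_left hfinal hDpos

theorem stmt_0 (A B : ℝ) (f : ℝ → ℝ) (M : ℝ)
    (hbd : ∀ x ∈ Set.Icc A B, |f x| ≤ M)
    (husc : UpperSemicontinuousOn f (Set.Icc A B))
    (a₁ a₂ b₁ b₂ : ℝ)
    (hA : A ≤ b₁) (hB : b₂ ≤ B)
    (h1 : b₁ < a₁) (h2 : a₁ < a₂) (h3 : a₂ < b₂)
    (hmid1 : 2 * f ((a₁ + b₁) / 2) > lcmaj (Set.Icc A B) f a₁ + lcmaj (Set.Icc A B) f b₁)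
    (hmid2 : 2 * f ((a₂ + b₂) / 2) > lcmaj (Set.Icc A B) f a₂ + lcmaj (Set.Icc A B) f b₂) :
    ∀ x ∈ Set.Icc a₁ a₂, lcmaj (Set.Icc A B) f x = lcmaj (Set.Icc b₁ b₂) f x := by
  intro x hx
  obtain ⟨hx1, hx2⟩ := hx
  set L := lcmaj (Set.Icc A B) f with hL
  set L' := lcmaj (Set.Icc b₁ b₂) f with hL'
  have hM' : ∀ z ∈ Set.Icc b₁ b₂, |f z| ≤ M := fun z hz =>
    hbd z ⟨le_trans hA hz.1, le_trans hz.2 hB⟩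
  have hxAB : x ∈ Set.Icc A B := ⟨by linarith, by linarith⟩
  have hxbb : x ∈ Set.Icc b₁ b₂ := ⟨by linarith, by linarith⟩
  have hLconc : ConcaveOn ℝ (Set.Icc A B) L := lcmaj_concave hbd
  have hL'conc : ConcaveOn ℝ (Set.Icc b₁ b₂) L' := lcmaj_concave hM'
  have hfL : ∀ z ∈ Set.Icc A B, f z ≤ L z := fun z hz => le_lcmaj hbd hz
  have hfL' : ∀ z ∈ Set.Icc b₁ b₂, f z ≤ L' z := fun z hz => le_lcmaj hM' hz
  -- core pair bound: both endpoints in [b₁,b₂]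
  have pbcore : ∀ u v cc dd t, b₁ ≤ u → u ≤ x → x ≤ v → v ≤ b₂ →
      cc ≤ f u → dd ≤ f v → 0 ≤ t → t ≤ 1 → x = t * u + (1 - t) * v →
      t * cc + (1 - t) * dd ≤ L' x := by
    intro u v cc dd t hbu hux hxv hvb hcf hdf ht0 ht1 hxeq
    have hu : u ∈ Set.Icc b₁ b₂ := ⟨hbu, by linarith⟩
    have hv : v ∈ Set.Icc b₁ b₂ := ⟨by linarith, hvb⟩
    have := concave_chord hL'conc hu hv (le_trans hcf (hfL' u hu))
      (le_trans hdf (hfL' v hv)) ht0 ht1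
    rwa [← hxeq] at this
  -- pair bound with left endpoint already in [b₁, x]
  have pb2 : ∀ u v cc dd t, b₁ ≤ u → u ≤ x → x ≤ v → v ≤ B →
      cc ≤ f u → dd ≤ f v → 0 ≤ t → t ≤ 1 → x = t * u + (1 - t) * v →
      t * cc + (1 - t) * dd ≤ L' x := by
    intro u v cc dd t hbu hux hxv hvB hcf hdf ht0 ht1 hxeq
    by_cases hvb : v ≤ b₂
    · exact pbcore u v cc dd t hbu hux hxv hvb hcf hdf ht0 ht1 hxeq
    push_neg at hvb
    set m₂ := (a₂ + b₂) / 2 with hm₂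
    have huAB : u ∈ Set.Icc A B := ⟨by linarith, by linarith⟩
    have hvAB : v ∈ Set.Icc A B := ⟨by linarith, by linarith⟩
    have huv : u < v := by linarith
    have l1 := linept hLconc huAB hvAB huv (by linarith : u ≤ a₂) (by linarith : a₂ ≤ v)
      (le_trans hcf (hfL u huAB)) (le_trans hdf (hfL v hvAB))
    have l2 := linept hLconc huAB hvAB huv (by linarith : u ≤ b₂) (by linarith : b₂ ≤ v)
      (le_trans hcf (hfL u huAB)) (le_trans hdf (hfL v hvAB))
    have h3' : (L a₂ + L b₂) * (v - u) < 2 * f m₂ * (v - u) := by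
      apply mul_lt_mul_of_pos_right _ (by linarith : (0:ℝ) < v - u)
      linarith [hmid2]
    have key : cc * (v - m₂) + dd * (m₂ - u) < f m₂ * (v - u) := by
      rw [hm₂]; nlinarith [l1, l2, h3']
    have hmu : (0:ℝ) < m₂ - u := by rw [hm₂]; linarith
    set t' := (m₂ - x) / (m₂ - u) with ht'
    have ht'0 : 0 ≤ t' := div_nonneg (by rw [hm₂]; linarith) hmu.le
    have ht'1 : t' ≤ 1 := by rw [ht', div_le_one hmu]; linarith
    have hxeq' : x = t' * u + (1 - t') * m₂ := by
      rw [ht']; field_simp; ring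
    have hval : t * cc + (1 - t) * dd ≤ t' * cc + (1 - t') * f m₂ := by
      rw [← sub_nonneg]
      have hid : (t' * cc + (1 - t') * f m₂) - (t * cc + (1 - t) * dd) =
          (1 - t) * (f m₂ * (v - u) - (cc * (v - m₂) + dd * (m₂ - u))) / (m₂ - u) := by
        rw [ht', hxeq]; field_simp; ring
      rw [hid]
      apply div_nonneg _ hmu.le
      apply mul_nonneg (by linarith) (by linarith)
    refine le_trans hval (pbcore u m₂ cc (f m₂) t' hbu hux ?_ ?_ hcf le_rfl ht'0 ht'1 hxeq')
    · rw [hm₂]; linarith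
    · rw [hm₂]; linarith
  -- full pair bound
  have pb : ∀ u v cc dd t, A ≤ u → u ≤ x → x ≤ v → v ≤ B →
      cc ≤ f u → dd ≤ f v → 0 ≤ t → t ≤ 1 → x = t * u + (1 - t) * v →
      t * cc + (1 - t) * dd ≤ L' x := by
    intro u v cc dd t hAu hux hxv hvB hcf hdf ht0 ht1 hxeq
    by_cases hbu : b₁ ≤ u
    · exact pb2 u v cc dd t hbu hux hxv hvB hcf hdf ht0 ht1 hxeq
    push_neg at hbu
    set m₁ := (a₁ + b₁) / 2 with hm₁
    have huAB : u ∈ Set.Icc A B := ⟨hAu, by linarith⟩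
    have hvAB : v ∈ Set.Icc A B := ⟨by linarith, hvB⟩
    have huv : u < v := by linarith
    have l1 := linept hLconc huAB hvAB huv (by linarith : u ≤ a₁) (by linarith : a₁ ≤ v)
      (le_trans hcf (hfL u huAB)) (le_trans hdf (hfL v hvAB))
    have l2 := linept hLconc huAB hvAB huv (by linarith : u ≤ b₁) (by linarith : b₁ ≤ v)
      (le_trans hcf (hfL u huAB)) (le_trans hdf (hfL v hvAB))
    have h3' : (L a₁ + L b₁) * (v - u) < 2 * f m₁ * (v - u) := by
      apply mul_lt_mul_of_pos_right _ (by linarith : (0:ℝ) < v - u)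
      linarith [hmid1]
    have key : cc * (v - m₁) + dd * (m₁ - u) < f m₁ * (v - u) := by
      rw [hm₁]; nlinarith [l1, l2, h3']
    have hvm : (0:ℝ) < v - m₁ := by rw [hm₁]; linarith
    set t' := (v - x) / (v - m₁) with ht'
    have ht'0 : 0 ≤ t' := div_nonneg (by linarith) hvm.le
    have ht'1 : t' ≤ 1 := by rw [ht', div_le_one hvm]; rw [hm₁]; linarith
    have hxeq' : x = t' * m₁ + (1 - t') * v := by
      rw [ht']; field_simp; ring
    have hval : t * cc + (1 - t) * dd ≤ t' * f m₁ + (1 - t') * dd := by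
      rw [← sub_nonneg]
      have hid : (t' * f m₁ + (1 - t') * dd) - (t * cc + (1 - t) * dd) =
          t * (f m₁ * (v - u) - (cc * (v - m₁) + dd * (m₁ - u))) / (v - m₁) := by
        rw [ht', hxeq]; field_simp; ring
      rw [hid]
      apply div_nonneg _ hvm.le
      apply mul_nonneg ht0 (by linarith)
    refine le_trans hval (pb2 m₁ v (f m₁) dd t' ?_ ?_ hxv hvB le_rfl hdf ht'0 ht'1 hxeq')
    · rw [hm₁]; linarith
    · rw [hm₁]; linarith
  have step2 : hfun A B f x ≤ L' x :=
    csSup_le ⟨f x, hfun_mem hxAB⟩ (hull_bound hxAB.1 hxAB.2 pb)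
  have step1 : L x ≤ hfun A B f x := lcmaj_le (hfun_concave hbd) (fun p hp => le_hfun hbd hp) hxAB
  have step3 : L' x ≤ L x :=
    lcmaj_le (hLconc.subset (Set.Icc_subset_Icc (by linarith) (by linarith)) (convex_Icc _ _))
      (fun z hz => hfL z ⟨by linarith [hz.1], by linarith [hz.2]⟩) hxbb
  linarith [step1, step2, step3]
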